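/- Suppose f ∈ K[X,X⁻¹] satisfies equation (★) and the support of f is contained in the non-positive integers (f has only non-positive powers of X). Then there exists a natural number d ≥ 0 such that f is one of: X^{−2d}·(R_d + Q); X^{−2d}·(R_d − 1); X^{−2d}·(R_d + b + u·X^{−1}); X^{−2d}·(R_d + b − v·X^{−1}). -/

import Mathlib

open LaurentPolynomial

/-- Equation (★): `(X² − 1)·f·f∨ = b·(X²·f∨ − f) − c·(X·f − X·f∨) + Q·(X² − 1)`,
where `Q = u·v`, `c = u − v`, `b = Q − 1` and `f∨` is the image of `f` under the
`K`-algebra involution of `K[X,X⁻¹]` sending `X` to `X⁻¹`. -/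
def SatStar {K : Type*} [Field K] (u v : K) (f : K[T;T⁻¹]) : Prop :=
  (T 2 - 1) * (f * invert f) =
    C (u * v - 1) * (T 2 * invert f - f)
      - C (u - v) * (T 1 * f - T 1 * invert f)
      + C (u * v) * (T 2 - 1)

/-- `R_d = Σ_{j=1}^{d} (b·X^{2j} + c·X^{2j−1})`. -/
noncomputable def Rpoly {K : Type*} [Field K] (u v : K) (d : ℕ) : K[T;T⁻¹] :=
  ∑ j ∈ Finset.range d, (C (u * v - 1) * T (2 * (j : ℤ) + 2) + C (u - v) * T (2 * (j : ℤ) + 1))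

namespace Star8aux

variable {K : Type*} [Field K]

lemma coeff_mul_one' (p q : Polynomial K) :
    (p * q).coeff 1 = p.coeff 0 * q.coeff 1 + p.coeff 1 * q.coeff 0 := by
  rw [Polynomial.coeff_mul, Finset.Nat.sum_antidiagonal_eq_sum_range_succ_mk]
  simp [Finset.sum_range_succ, add_comm]

/-- every Laurent polynomial supported in nonneg degrees comes from a polynomial -/
lemma exists_poly (f : K[T;T⁻¹]) (h : ∀ n ∈ f.coeff.support, 0 ≤ n) :
    ∃ p : Polynomial K, Polynomial.toLaurent p = f := by
  refine ⟨f.coeff.support.sum fun n => Polynomial.monomial n.toNat (f.coeff n), ?_⟩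
  rw [map_sum]
  have : ∀ n ∈ f.coeff.support,
      Polynomial.toLaurent (Polynomial.monomial n.toNat (f.coeff n)) =
        AddMonoidAlgebra.single n (f.coeff n) := by
    intro n hn
    rw [Polynomial.toLaurent_C_mul_T, ← single_eq_C_mul_T, Int.toNat_of_nonneg (h n hn)]
  rw [Finset.sum_congr rfl this]
  conv_rhs => rw [← AddMonoidAlgebra.sum_coeff_single f]
  rfl

/-- the polynomial form of equation (★), multiplied through by `T m`. -/
def PP (u v : K) (m : ℕ) (p r : Polynomial K) : Prop :=
  (Polynomial.X ^ 2 - 1) * (r * p) =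
    Polynomial.C (u * v - 1) * (Polynomial.X ^ (m + 2) * p - r)
      - Polynomial.C (u - v) * (Polynomial.X ^ 1 * r - Polynomial.X ^ (m + 1) * p)
      + Polynomial.C (u * v) * (Polynomial.X ^ (m + 2) - Polynomial.X ^ m)

/-- the conclusion: membership in one of the four families -/
def Fam (u v : K) (f : K[T;T⁻¹]) : Prop :=
  ∃ d : ℕ,
      f = T (-(2 * (d : ℤ))) * (Rpoly u v d + C (u * v)) ∨
      f = T (-(2 * (d : ℤ))) * (Rpoly u v d - 1) ∨
      f = T (-(2 * (d : ℤ))) * (Rpoly u v d + C (u * v - 1) + C u * T (-1)) ∨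
      f = T (-(2 * (d : ℤ))) * (Rpoly u v d + C (u * v - 1) - C v * T (-1))

lemma T_mul_T (a c : ℤ) : (T a * T c : K[T;T⁻¹]) = T (a + c) := (T_add a c).symm

lemma lift_eq (u v : K) (d : ℕ) (E : K[T;T⁻¹]) :
    T (-(2 * ((d : ℤ) + 1))) * (Rpoly u v (d + 1) + E) =
      C (u * v - 1) + C (u - v) * T (-1)
        + T (-2) * (T (-(2 * (d : ℤ))) * (Rpoly u v d + E)) := by
  rw [Rpoly, Finset.sum_range_succ, ← Rpoly]
  have h1 : (T (-(2 * ((d : ℤ) + 1))) : K[T;T⁻¹]) = T (-(2 * (d:ℤ))) * T (-2) := by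
    rw [T_mul_T]; ring_nf
  have h2 : (T (2 * (d:ℤ) + 2) : K[T;T⁻¹]) = T (2 * (d:ℤ)) * T 2 := by rw [T_mul_T]
  have h3 : (T (2 * (d:ℤ) + 1) : K[T;T⁻¹]) = T (2 * (d:ℤ)) * T 2 * T (-1) := by
    rw [T_mul_T, T_mul_T]; ring_nf
  have h4 : (T (-(2 * (d:ℤ))) * T (2 * (d:ℤ)) : K[T;T⁻¹]) = 1 := by
    rw [T_mul_T]; simp
  have h5 : (T (-2 : ℤ) * T (2 : ℤ) : K[T;T⁻¹]) = 1 := by rw [T_mul_T]; simp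
  rw [h1, h2, h3]
  linear_combination (C (u*v-1) + C (u-v) * T (-1:ℤ)) * (T (-2:ℤ) * T (2:ℤ) * h4 + h5)

lemma fam0_i (u v : K) :
    (T (-(2 * ((0:ℕ) : ℤ))) * (Rpoly u v 0 + C (u * v)) : K[T;T⁻¹]) = C (u * v) := by
  simp [Rpoly]

lemma fam0_ii (u v : K) :
    (T (-(2 * ((0:ℕ) : ℤ))) * (Rpoly u v 0 - 1) : K[T;T⁻¹]) = C (-1 : K) := by
  simp [Rpoly]

lemma fam0_iii (u v : K) :
    (T (-(2 * ((0:ℕ) : ℤ))) * (Rpoly u v 0 + C (u * v - 1) + C u * T (-1)) : K[T;T⁻¹])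
      = C (u * v - 1) + C u * T (-1) := by
  simp [Rpoly]

lemma fam0_iv (u v : K) :
    (T (-(2 * ((0:ℕ) : ℤ))) * (Rpoly u v 0 + C (u * v - 1) - C v * T (-1)) : K[T;T⁻¹])
      = C (u * v - 1) - C v * T (-1) := by
  simp [Rpoly]

lemma bridge (u v : K) (f : K[T;T⁻¹]) (hf : SatStar u v f) (p : Polynomial K)
    (hp : Polynomial.toLaurent p = invert f) :
    PP u v p.natDegree p p.reverse := by
  unfold SatStar at hf
  unfold PP
  simp only [map_sub, map_mul, map_one] at hf
  have hfp : invert (Polynomial.toLaurent p) = f := by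
    rw [hp]; exact involutive_invert f
  have hr : Polynomial.toLaurent p.reverse = f * T (p.natDegree : ℤ) := by
    rw [toLaurent_reverse, hfp]
  apply Polynomial.toLaurent_injective
  simp only [map_mul, map_sub, map_add, map_one, Polynomial.toLaurent_C,
    Polynomial.toLaurent_X_pow, hr, hp]
  push_cast
  have e2 : (T ((p.natDegree : ℤ) + 2) : K[T;T⁻¹]) = T (p.natDegree : ℤ) * T 2 := T_add _ _
  have e1 : (T ((p.natDegree : ℤ) + 1) : K[T;T⁻¹]) = T (p.natDegree : ℤ) * T 1 := T_add _ _
  rw [e2, e1]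
  linear_combination T ((p.natDegree : ℤ)) * hf

lemma sq_T_neg_one : ((T (-1) : K[T;T⁻¹]))^2 = T (-2) := by
  rw [sq, T_mul_T]; norm_num

/-- the main induction -/
lemma main (u v : K) (m : ℕ) : ∀ p r : Polynomial K, p.natDegree ≤ m → r.natDegree ≤ m →
    (∀ k, k ≤ m → r.coeff k = p.coeff (m - k)) → PP u v m p r →
    Fam u v (invert (Polynomial.toLaurent p)) := by
  induction m using Nat.strong_induction_on with
  | _ m IH =>
  rcases m with _ | m'
  · -- m = 0
    intro p r hdp hdr hlink hPP
    unfold PP at hPP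
    have hE : r * p * Polynomial.X ^ 2 - r * p =
        Polynomial.C (u*v-1) * (p * Polynomial.X ^ (0+2)) - Polynomial.C (u*v-1) * r
        - Polynomial.C (u-v) * (r * Polynomial.X ^ 1)
        + Polynomial.C (u-v) * (p * Polynomial.X ^ (0+1))
        + Polynomial.C (u*v) * Polynomial.X ^ (0+2)
        - Polynomial.C (u*v) * Polynomial.X ^ 0 := by
      linear_combination hPP
    have h0 := congrArg (fun q => Polynomial.coeff q 0) hE
    simp [Polynomial.coeff_sub, Polynomial.coeff_add, Polynomial.coeff_C_mul,
      Polynomial.coeff_mul_X_pow', Polynomial.mul_coeff_zero, Polynomial.coeff_X_pow,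
      Polynomial.coeff_C] at h0
    have hr0 : r.coeff 0 = p.coeff 0 := by simpa using hlink 0 (le_refl 0)
    rw [hr0] at h0
    have hquad : (p.coeff 0 - u*v) * (p.coeff 0 + 1) = 0 := by linear_combination -h0
    have hpC : p = Polynomial.C (p.coeff 0) := Polynomial.eq_C_of_natDegree_le_zero hdp
    have hfval : invert (Polynomial.toLaurent p) = C (p.coeff 0) := by
      conv_lhs => rw [hpC, Polynomial.toLaurent_C, invert_C]
    rcases mul_eq_zero.mp hquad with h | h
    · refine ⟨0, Or.inl ?_⟩
      rw [fam0_i, hfval]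
      exact congrArg C (sub_eq_zero.mp h)
    · refine ⟨0, Or.inr (Or.inl ?_)⟩
      rw [fam0_ii, hfval]
      exact congrArg C (by linear_combination h)
  rcases m' with _ | k
  · -- m = 1
    intro p r hdp hdr hlink hPP
    unfold PP at hPP
    have hE : r * p * Polynomial.X ^ 2 - r * p =
        Polynomial.C (u*v-1) * (p * Polynomial.X ^ (1+2)) - Polynomial.C (u*v-1) * r
        - Polynomial.C (u-v) * (r * Polynomial.X ^ 1)
        + Polynomial.C (u-v) * (p * Polynomial.X ^ (1+1))
        + Polynomial.C (u*v) * Polynomial.X ^ (1+2)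
        - Polynomial.C (u*v) * Polynomial.X ^ 1 := by
      linear_combination hPP
    have h0 := congrArg (fun q => Polynomial.coeff q 0) hE
    simp [Polynomial.coeff_sub, Polynomial.coeff_add, Polynomial.coeff_C_mul,
      Polynomial.coeff_mul_X_pow', Polynomial.mul_coeff_zero, Polynomial.coeff_X_pow,
      Polynomial.coeff_C] at h0
    have h1 := congrArg (fun q => Polynomial.coeff q 1) hE
    simp [Polynomial.coeff_sub, Polynomial.coeff_add, Polynomial.coeff_C_mul,
      coeff_mul_one', Polynomial.coeff_mul_X_pow', Polynomial.mul_coeff_zero,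
      Polynomial.coeff_X_pow, Polynomial.coeff_C, Polynomial.coeff_one,
      Polynomial.coeff_X] at h1
    have hr0 : r.coeff 0 = p.coeff 1 := by simpa using hlink 0 (by norm_num)
    have hr1 : r.coeff 1 = p.coeff 0 := by simpa using hlink 1 (le_refl 1)
    rw [hr0] at h0 h1
    rw [hr1] at h1
    have hpX : p = Polynomial.C (p.coeff 1) * Polynomial.X + Polynomial.C (p.coeff 0) :=
      Polynomial.eq_X_add_C_of_natDegree_le_one hdp
    have hfval : invert (Polynomial.toLaurent p) = C (p.coeff 1) * T (-1) + C (p.coeff 0) := by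
      conv_lhs => rw [hpX]
      simp only [map_add, map_mul, Polynomial.toLaurent_C, Polynomial.toLaurent_X,
        invert_T, invert_C]
    by_cases hp1 : p.coeff 1 = 0
    · rw [hp1] at h0 h1 hfval
      have hquad : (p.coeff 0 - u*v) * (p.coeff 0 + 1) = 0 := by linear_combination -h1
      rcases mul_eq_zero.mp hquad with h | h
      · refine ⟨0, Or.inl ?_⟩
        rw [fam0_i, hfval]
        have e : p.coeff 0 = u * v := sub_eq_zero.mp h
        rw [e]
        simp
      · refine ⟨0, Or.inr (Or.inl ?_)⟩
        rw [fam0_ii, hfval]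
        have e : p.coeff 0 = -1 := by linear_combination h
        rw [e]
        simp
    · have hb : p.coeff 0 = u * v - 1 := by
        have e : p.coeff 1 * (p.coeff 0 - (u*v-1)) = 0 := by linear_combination h0
        have := (mul_eq_zero.mp e).resolve_left hp1
        linear_combination this
      rw [hb] at h1
      have hquad : (p.coeff 1 - u) * (p.coeff 1 + v) = 0 := by linear_combination -h1
      rcases mul_eq_zero.mp hquad with h | h
      · refine ⟨0, Or.inr (Or.inr (Or.inl ?_))⟩
        rw [fam0_iii, hfval, hb]
        have e : p.coeff 1 = u := sub_eq_zero.mp h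
        rw [e]
        ring
      · refine ⟨0, Or.inr (Or.inr (Or.inr ?_))⟩
        rw [fam0_iv, hfval, hb]
        have e : p.coeff 1 = -v := by linear_combination h
        rw [e]
        simp only [map_neg]
        ring
  · -- m = k + 2
    intro p r hdp hdr hlink hPP
    by_cases hp0 : p.coeff (k + 2) = 0
    · -- top coefficient vanishes: descend to k+1
      have hr00 : r.coeff 0 = 0 := by
        have e := hlink 0 (Nat.zero_le _)
        simpa [hp0] using e
      have hrX : r = Polynomial.X * r.divX := by
        conv_lhs => rw [← Polynomial.X_mul_divX_add r]
        rw [hr00]; simp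
      have hdp' : p.natDegree ≤ k + 1 := by
        rw [Polynomial.natDegree_le_iff_coeff_eq_zero]
        intro N hN
        rcases eq_or_lt_of_le (show k + 2 ≤ N by omega) with h | h
        · rw [← h]; exact hp0
        · exact Polynomial.coeff_eq_zero_of_natDegree_lt (lt_of_le_of_lt hdp h)
      have hdr' : r.divX.natDegree ≤ k + 1 := by
        rw [Polynomial.natDegree_le_iff_coeff_eq_zero]
        intro N hN
        rw [Polynomial.coeff_divX]
        exact Polynomial.coeff_eq_zero_of_natDegree_lt (by omega)
      have hlink' : ∀ j, j ≤ k + 1 → r.divX.coeff j = p.coeff (k + 1 - j) := by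
        intro j hj
        rw [Polynomial.coeff_divX]
        have e := hlink (j+1) (by omega)
        rw [e]
        congr 1
        omega
      have hPP' : PP u v (k+1) p r.divX := by
        unfold PP at hPP ⊢
        have key : Polynomial.X * ((Polynomial.X ^ 2 - 1) * (r.divX * p)) =
            Polynomial.X * (Polynomial.C (u * v - 1) * (Polynomial.X ^ (k+1 + 2) * p - r.divX)
              - Polynomial.C (u - v) * (Polynomial.X ^ 1 * r.divX - Polynomial.X ^ (k+1+1) * p)
              + Polynomial.C (u * v) * (Polynomial.X ^ (k+1+2) - Polynomial.X ^ (k+1))) := by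
          linear_combination hPP - ((Polynomial.X^2 - 1) * p + Polynomial.C (u*v-1)
            + Polynomial.C (u-v) * Polynomial.X) * hrX
        exact mul_left_cancel₀ Polynomial.X_ne_zero key
      exact IH (k+1) (by omega) p r.divX hdp' hdr' hlink' hPP'
    · -- top coefficient nonzero: strip two degrees
      have hr0e : r.coeff 0 = p.coeff (k+2) := by simpa using hlink 0 (Nat.zero_le _)
      have hr0ne : r.coeff 0 ≠ 0 := by rw [hr0e]; exact hp0
      unfold PP at hPP
      have hE : r * p * Polynomial.X ^ 2 - r * p =
          Polynomial.C (u*v-1) * (p * Polynomial.X ^ (k+2+2)) - Polynomial.C (u*v-1) * r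
          - Polynomial.C (u-v) * (r * Polynomial.X ^ 1)
          + Polynomial.C (u-v) * (p * Polynomial.X ^ (k+2+1))
          + Polynomial.C (u*v) * Polynomial.X ^ (k+2+2)
          - Polynomial.C (u*v) * Polynomial.X ^ (k+2) := by
        linear_combination hPP
      have h0 := congrArg (fun q => Polynomial.coeff q 0) hE
      simp [Polynomial.coeff_sub, Polynomial.coeff_add, Polynomial.coeff_C_mul,
        Polynomial.coeff_mul_X_pow', Polynomial.mul_coeff_zero, Polynomial.coeff_X_pow,
        Polynomial.coeff_C] at h0
      have h1 := congrArg (fun q => Polynomial.coeff q 1) hE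
      simp [Polynomial.coeff_sub, Polynomial.coeff_add, Polynomial.coeff_C_mul,
        coeff_mul_one', Polynomial.coeff_mul_X_pow', Polynomial.mul_coeff_zero,
        Polynomial.coeff_X_pow, Polynomial.coeff_C, Polynomial.coeff_one,
        Polynomial.coeff_X] at h1
      have hb : p.coeff 0 = u * v - 1 := by
        have e : r.coeff 0 * (p.coeff 0 - (u*v-1)) = 0 := by linear_combination h0
        have := (mul_eq_zero.mp e).resolve_left hr0ne
        linear_combination this
      have hc : p.coeff 1 = u - v := by
        have e : r.coeff 0 * (p.coeff 1 - (u-v)) = 0 := by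
          linear_combination -h1 - r.coeff 1 * hb
        have := (mul_eq_zero.mp e).resolve_left hr0ne
        linear_combination this
      -- strip p
      set p2 := p.divX.divX with hp2def
      have hp2c : ∀ i, p2.coeff i = p.coeff (i+2) := by
        intro i
        rw [hp2def, Polynomial.coeff_divX, Polynomial.coeff_divX]
      have hp2eq : p = p2 * Polynomial.X ^ 2 + Polynomial.C (u-v) * Polynomial.X
          + Polynomial.C (u*v-1) := by
        have e1 := Polynomial.X_mul_divX_add p
        have e2 := Polynomial.X_mul_divX_add p.divX
        rw [show p.divX.coeff 0 = p.coeff 1 from Polynomial.coeff_divX] at e2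
        rw [hb] at e1
        rw [hc] at e2
        linear_combination -e1 - Polynomial.X * e2
      have hdp2 : p2.natDegree ≤ k := by
        rw [Polynomial.natDegree_le_iff_coeff_eq_zero]
        intro N hN
        rw [hp2c]
        exact Polynomial.coeff_eq_zero_of_natDegree_lt (by omega)
      -- strip r
      have hrm : r.coeff (k+2) = u*v-1 := by
        have e := hlink (k+2) le_rfl
        simpa [hb] using e
      have hrm1 : r.coeff (k+1) = u-v := by
        have e := hlink (k+1) (by omega)
        rw [show k+2 - (k+1) = 1 by omega] at e
        rw [e, hc]
      set r2 := r - Polynomial.C (u*v-1) * Polynomial.X ^ (k+2)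
          - Polynomial.C (u-v) * Polynomial.X ^ (k+1) with hr2def
      have hr2eq : r = r2 + Polynomial.C (u*v-1) * Polynomial.X ^ (k+2)
          + Polynomial.C (u-v) * Polynomial.X ^ (k+1) := by
        rw [hr2def]; ring
      have hr2c : ∀ j, r2.coeff j = r.coeff j
          - (u*v-1) * (if j = k+2 then 1 else 0) - (u-v) * (if j = k+1 then 1 else 0) := by
        intro j
        rw [hr2def]
        simp only [Polynomial.coeff_sub, Polynomial.coeff_C_mul, Polynomial.coeff_X_pow]
      have hdr2 : r2.natDegree ≤ k := by
        rw [Polynomial.natDegree_le_iff_coeff_eq_zero]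
        intro N hN
        rw [hr2c]
        rcases (show N = k+1 ∨ N = k+2 ∨ k+2 < N by omega) with h | h | h
        · subst h
          rw [hrm1]
          simp [show ¬ (k+1 = k+2) by omega]
        · subst h
          rw [hrm]
          simp [show ¬ (k+2 = k+1) by omega]
        · rw [Polynomial.coeff_eq_zero_of_natDegree_lt (by omega : r.natDegree < N)]
          simp [show ¬ (N = k+2) by omega, show ¬ (N = k+1) by omega]
      have hlink2 : ∀ j, j ≤ k → r2.coeff j = p2.coeff (k - j) := by
        intro j hj
        rw [hr2c]
        have e := hlink j (by omega)
        rw [e]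
        rw [hp2c]
        rw [show k - j + 2 = k + 2 - j by omega]
        simp [show ¬ (j = k+2) by omega, show ¬ (j = k+1) by omega]
      have hPP2 : PP u v k p2 r2 := by
        unfold PP
        have key : Polynomial.X ^ 2 * ((Polynomial.X ^ 2 - 1) * (r2 * p2)) =
            Polynomial.X ^ 2 * (Polynomial.C (u * v - 1) * (Polynomial.X ^ (k + 2) * p2 - r2)
              - Polynomial.C (u - v) * (Polynomial.X ^ 1 * r2 - Polynomial.X ^ (k + 1) * p2)
              + Polynomial.C (u * v) * (Polynomial.X ^ (k + 2) - Polynomial.X ^ k)) := by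
          linear_combination hE
            - ((Polynomial.X^2-1)*r - Polynomial.C (u*v-1) * Polynomial.X^(k+4)
               - Polynomial.C (u-v) * Polynomial.X^(k+3)) * hp2eq
            - ((Polynomial.X^2-1)*(p2*Polynomial.X^2 + Polynomial.C (u-v)*Polynomial.X
               + Polynomial.C (u*v-1)) + Polynomial.C (u*v-1)
               + Polynomial.C (u-v)*Polynomial.X) * hr2eq
        exact mul_left_cancel₀ (pow_ne_zero 2 Polynomial.X_ne_zero) key
      have hFam2 := IH k (by omega) p2 r2 hdp2 hdr2 hlink2 hPP2
      have hfsplit : invert (Polynomial.toLaurent p) =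
          C (u*v-1) + C (u-v) * T (-1) + T (-2) * invert (Polynomial.toLaurent p2) := by
        conv_lhs => rw [hp2eq]
        simp only [map_add, map_mul, map_pow, Polynomial.toLaurent_C, Polynomial.toLaurent_X,
          invert_T, invert_C]
        rw [sq_T_neg_one]
        ring
      obtain ⟨d, hcase⟩ := hFam2
      have main_eq : ∀ E : K[T;T⁻¹],
          invert (Polynomial.toLaurent p2) = T (-(2*(d:ℤ))) * (Rpoly u v d + E) →
          invert (Polynomial.toLaurent p) = T (-(2*((d+1:ℕ):ℤ))) * (Rpoly u v (d+1) + E) := by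
        intro E hEe
        rw [hfsplit, hEe, show ((d+1:ℕ):ℤ) = (d:ℤ)+1 by push_cast; ring, lift_eq]
      refine ⟨d+1, ?_⟩
      rcases hcase with h | h | h | h
      · exact Or.inl (main_eq _ h)
      · refine Or.inr (Or.inl ?_)
        have h' : invert (Polynomial.toLaurent p2)
            = T (-(2*(d:ℤ))) * (Rpoly u v d + (-1)) := by rw [h]; ring
        rw [main_eq _ h']
        ring
      · refine Or.inr (Or.inr (Or.inl ?_))
        have h' : invert (Polynomial.toLaurent p2)
            = T (-(2*(d:ℤ))) * (Rpoly u v d + (C (u*v-1) + C u * T (-1))) := by rw [h]; ring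
        rw [main_eq _ h']
        ring
      · refine Or.inr (Or.inr (Or.inr ?_))
        have h' : invert (Polynomial.toLaurent p2)
            = T (-(2*(d:ℤ))) * (Rpoly u v d + (C (u*v-1) - C v * T (-1))) := by rw [h]; ring
        rw [main_eq _ h']
        ring

end Star8aux

/-- A solution of (★) supported in non-positive degrees belongs to one of the
four families (i)–(iv) of Lemma 3.4 of the paper. -/
theorem statement8 {K : Type*} [Field K] (u v : K) (f : K[T;T⁻¹])
    (hf : SatStar u v f) (hsupp : ∀ n ∈ f.coeff.support, n ≤ 0) :
    ∃ d : ℕ,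
      f = T (-(2 * (d : ℤ))) * (Rpoly u v d + C (u * v)) ∨
      f = T (-(2 * (d : ℤ))) * (Rpoly u v d - 1) ∨
      f = T (-(2 * (d : ℤ))) * (Rpoly u v d + C (u * v - 1) + C u * T (-1)) ∨
      f = T (-(2 * (d : ℤ))) * (Rpoly u v d + C (u * v - 1) - C v * T (-1)) := by
  have hg : ∀ n ∈ (invert f).coeff.support, 0 ≤ n := by
    intro n hn
    have h1 : (invert f).coeff n ≠ 0 := Finsupp.mem_support_iff.mp hn
    rw [invert_apply] at h1
    have h2 := hsupp (-n) (Finsupp.mem_support_iff.mpr h1)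
    omega
  obtain ⟨p, hp⟩ := Star8aux.exists_poly _ hg
  have hPP := Star8aux.bridge u v f hf p hp
  have hlink : ∀ k2, k2 ≤ p.natDegree → p.reverse.coeff k2 = p.coeff (p.natDegree - k2) := by
    intro k2 hk2
    rw [Polynomial.coeff_reverse, Polynomial.revAt_le hk2]
  have hFam := Star8aux.main u v p.natDegree p p.reverse le_rfl p.reverse_natDegree_le hlink hPP
  have hfp : invert (Polynomial.toLaurent p) = f := by
    rw [hp]; exact involutive_invert f
  rw [hfp] at hFam
  obtain ⟨d, h⟩ := hFam
  exact ⟨d, h⟩
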